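/- Let M be a smooth manifold, U ⊆ M open, and f : U → ℝ a function that is both locally semiconcave and locally semiconvex on U. Then f is C^{1,1}_loc on U, i.e., f is C¹ and in every chart its differential is locally Lipschitz. Conversely, every C^{1,1}_loc function on U is locally semiconcave and locally semiconvex. -/

import Mathlib

noncomputable section

open scoped Manifold
open Metric

/-- `f` is locally semiconcave on `V ⊆ ℝⁿ`: around each point of `V` there is a ball
contained in `V` on which `f` is `K`-semiconcave for some `K`. -/
def LocSemiconcaveOn {n : ℕ} (f : EuclideanSpace ℝ (Fin n) → ℝ)
    (V : Set (EuclideanSpace ℝ (Fin n))) : Prop :=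
  ∀ x ∈ V, ∃ ε > (0 : ℝ), ∃ K : ℝ, ball x ε ⊆ V ∧
    ∀ y ∈ ball x ε, ∃ p : EuclideanSpace ℝ (Fin n) →L[ℝ] ℝ,
      ∀ z ∈ ball x ε, f z ≤ f y + p (z - y) + K * ‖z - y‖ ^ 2

/-- `f` is locally semiconvex on `V ⊆ ℝⁿ`. -/
def LocSemiconvexOn {n : ℕ} (f : EuclideanSpace ℝ (Fin n) → ℝ)
    (V : Set (EuclideanSpace ℝ (Fin n))) : Prop :=
  ∀ x ∈ V, ∃ ε > (0 : ℝ), ∃ K : ℝ, ball x ε ⊆ V ∧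
    ∀ y ∈ ball x ε, ∃ p : EuclideanSpace ℝ (Fin n) →L[ℝ] ℝ,
      ∀ z ∈ ball x ε, f y + p (z - y) - K * ‖z - y‖ ^ 2 ≤ f z

/-- `f` is `C^{1,1}_loc` on `V ⊆ ℝⁿ`: it is differentiable on `V` and its derivative is
locally Lipschitz on `V`. -/
def C11On {n : ℕ} (f : EuclideanSpace ℝ (Fin n) → ℝ)
    (V : Set (EuclideanSpace ℝ (Fin n))) : Prop :=
  ∃ f' : EuclideanSpace ℝ (Fin n) → (EuclideanSpace ℝ (Fin n) →L[ℝ] ℝ),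
    (∀ x ∈ V, HasFDerivAt f (f' x) x) ∧
    ∀ x ∈ V, ∃ ε > (0 : ℝ), ∃ K : NNReal, LipschitzOnWith K f' (ball x ε ∩ V)

/-- Chart-wise local semiconcavity of `f : M → ℝ` on `U ⊆ M`. -/
def MLocSemiconcaveOn {n : ℕ} {M : Type*} [TopologicalSpace M]
    [ChartedSpace (EuclideanSpace ℝ (Fin n)) M] (f : M → ℝ) (U : Set M) : Prop :=
  ∀ e ∈ atlas (EuclideanSpace ℝ (Fin n)) M,
    LocSemiconcaveOn (fun z => f (e.symm z)) (e '' (U ∩ e.source))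

/-- Chart-wise local semiconvexity of `f : M → ℝ` on `U ⊆ M`. -/
def MLocSemiconvexOn {n : ℕ} {M : Type*} [TopologicalSpace M]
    [ChartedSpace (EuclideanSpace ℝ (Fin n)) M] (f : M → ℝ) (U : Set M) : Prop :=
  ∀ e ∈ atlas (EuclideanSpace ℝ (Fin n)) M,
    LocSemiconvexOn (fun z => f (e.symm z)) (e '' (U ∩ e.source))

/-- Chart-wise `C^{1,1}_loc` regularity of `f : M → ℝ` on `U ⊆ M`: in every chart, `f` is
`C¹` with locally Lipschitz differential. -/
def MC11On {n : ℕ} {M : Type*} [TopologicalSpace M]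
    [ChartedSpace (EuclideanSpace ℝ (Fin n)) M] (f : M → ℝ) (U : Set M) : Prop :=
  ∀ e ∈ atlas (EuclideanSpace ℝ (Fin n)) M,
    C11On (fun z => f (e.symm z)) (e '' (U ∩ e.source))

private lemma hasFDerivAt_of_quadratic_bound {n : ℕ}
    {f : EuclideanSpace ℝ (Fin n) → ℝ} {y : EuclideanSpace ℝ (Fin n)}
    {p : EuclideanSpace ℝ (Fin n) →L[ℝ] ℝ} {K r : ℝ} (hK : 0 ≤ K) (hr : 0 < r)
    (h : ∀ z ∈ ball y r, |f z - f y - p (z - y)| ≤ K * ‖z - y‖ ^ 2) :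
    HasFDerivAt f p y := by
  rw [hasFDerivAt_iff_isLittleO]
  rw [Asymptotics.isLittleO_iff]
  intro c hc
  have hδ : 0 < min r (c / (K + 1)) := lt_min hr (div_pos hc (by linarith))
  filter_upwards [ball_mem_nhds y hδ] with z hz
  have hz' : z ∈ ball y r := ball_subset_ball (min_le_left _ _) hz
  have h1 : ‖z - y‖ < c / (K + 1) := by
    have := mem_ball_iff_norm.1 hz
    exact lt_of_lt_of_le this (min_le_right _ _)
  have h2 : 0 ≤ ‖z - y‖ := norm_nonneg _
  have h3 := h z hz'
  have h4 : K * ‖z - y‖ ≤ c := by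
    rw [lt_div_iff₀ (by linarith : (0:ℝ) < K + 1)] at h1
    nlinarith
  calc |f z - f y - p (z - y)| ≤ K * ‖z - y‖ ^ 2 := h3
    _ = (K * ‖z - y‖) * ‖z - y‖ := by ring
    _ ≤ c * ‖z - y‖ := by nlinarith

private lemma key_estimate {n : ℕ} {f : EuclideanSpace ℝ (Fin n) → ℝ}
    {V : Set (EuclideanSpace ℝ (Fin n))}
    (hcc : LocSemiconcaveOn f V) (hcv : LocSemiconvexOn f V) {x : EuclideanSpace ℝ (Fin n)}
    (hx : x ∈ V) :
    ∃ ε > (0:ℝ), ∃ K ≥ (0:ℝ), ball x ε ⊆ V ∧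
      ∀ y ∈ ball x ε, ∃ p : EuclideanSpace ℝ (Fin n) →L[ℝ] ℝ,
        ∀ z ∈ ball x ε, |f z - f y - p (z - y)| ≤ K * ‖z - y‖ ^ 2 := by
  obtain ⟨ε₁, hε₁, K₁, hb₁, h₁⟩ := hcc x hx
  obtain ⟨ε₂, hε₂, K₂, hb₂, h₂⟩ := hcv x hx
  set ε := min ε₁ ε₂ with hε_def
  set K := max (max K₁ K₂) 0 with hK_def
  have hε : 0 < ε := lt_min hε₁ hε₂
  have hK : 0 ≤ K := le_max_right _ _
  have hK₁ : K₁ ≤ K := le_trans (le_max_left _ _) (le_max_left _ _)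
  have hK₂ : K₂ ≤ K := le_trans (le_max_right _ _) (le_max_left _ _)
  have hsub₁ : ball x ε ⊆ ball x ε₁ := ball_subset_ball (min_le_left _ _)
  have hsub₂ : ball x ε ⊆ ball x ε₂ := ball_subset_ball (min_le_right _ _)
  refine ⟨ε, hε, K, hK, fun z hz => hb₁ (hsub₁ hz), fun y hy => ?_⟩
  obtain ⟨p, hp⟩ := h₁ y (hsub₁ hy)
  obtain ⟨q, hq⟩ := h₂ y (hsub₂ hy)
  -- upper and lower bounds with common constant K
  have hA : ∀ z ∈ ball x ε, f z - f y - p (z - y) ≤ K * ‖z - y‖ ^ 2 := by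
    intro z hz
    have := hp z (hsub₁ hz)
    nlinarith [sq_nonneg ‖z - y‖]
  have hB : ∀ z ∈ ball x ε, -(K * ‖z - y‖ ^ 2) ≤ f z - f y - q (z - y) := by
    intro z hz
    have := hq z (hsub₂ hz)
    nlinarith [sq_nonneg ‖z - y‖]
  have hr : 0 < ε - dist y x := by simpa [sub_pos] using mem_ball.1 hy
  have hball : ∀ v : EuclideanSpace ℝ (Fin n), ‖v‖ < ε - dist y x → y + v ∈ ball x ε := by
    intro v hv
    have : dist (y + v) x ≤ ‖v‖ + dist y x := by
      calc dist (y + v) x ≤ dist (y + v) y + dist y x := dist_triangle _ _ _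
        _ = ‖v‖ + dist y x := by rw [dist_eq_norm]; simp
    exact mem_ball.2 (by linarith)
  -- p = q
  have hle : ∀ v : EuclideanSpace ℝ (Fin n), q v ≤ p v := by
    intro v
    rcases eq_or_ne v 0 with rfl | hv0
    · simp
    have hv : 0 < ‖v‖ := norm_pos_iff.2 hv0
    refine le_of_forall_pos_le_add fun c hc => ?_
    set r := ε - dist y x with hr_def
    set t := min (r / (2 * ‖v‖)) (c / (2 * K * ‖v‖ ^ 2 + 1)) with ht_def
    have htpos : 0 < t := lt_min (by positivity) (by positivity)
    have ht1 : t * ‖v‖ < r := by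
      have hta : t ≤ r / (2 * ‖v‖) := min_le_left _ _
      have h2 : t * (2 * ‖v‖) ≤ r := (le_div_iff₀ (by positivity)).1 hta
      nlinarith
    have hz : y + t • v ∈ ball x ε := by
      refine hball _ ?_
      rw [norm_smul, Real.norm_eq_abs, abs_of_pos htpos]
      exact ht1
    have hzy : (y + t • v) - y = t • v := by abel
    have hA' := hA _ hz
    have hB' := hB _ hz
    rw [hzy] at hA' hB'
    have hnorm : ‖t • v‖ ^ 2 = t ^ 2 * ‖v‖ ^ 2 := by
      rw [norm_smul, Real.norm_eq_abs, mul_pow, sq_abs]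
    have hpv : p (t • v) = t * p v := by rw [map_smul]; simp
    have hqv : q (t • v) = t * q v := by rw [map_smul]; simp
    rw [hnorm, hpv] at hA'
    rw [hnorm, hqv] at hB'
    -- t * q v ≤ t * p v + 2 K t² ‖v‖²
    have hmain : t * q v ≤ t * p v + 2 * K * t ^ 2 * ‖v‖ ^ 2 := by linarith
    have ht2 : 2 * K * t * ‖v‖ ^ 2 ≤ c := by
      have : t ≤ c / (2 * K * ‖v‖ ^ 2 + 1) := min_le_right _ _
      have hd : 0 < 2 * K * ‖v‖ ^ 2 + 1 := by positivity
      rw [le_div_iff₀ hd] at this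
      nlinarith
    have hq' : q v ≤ p v + 2 * K * t * ‖v‖ ^ 2 :=
      (mul_le_mul_iff_right₀ htpos).1
        (by calc t * q v ≤ t * p v + 2 * K * t ^ 2 * ‖v‖ ^ 2 := hmain
              _ = t * (p v + 2 * K * t * ‖v‖ ^ 2) := by ring)
    linarith
  have hpq : p = q := by
    apply ContinuousLinearMap.ext
    intro v
    have h1 := hle v
    have h2 := hle (-v)
    simp only [map_neg] at h2
    linarith
  refine ⟨p, fun z hz => ?_⟩
  rw [abs_le]
  refine ⟨?_, hA z hz⟩
  have := hB z hz
  rw [← hpq] at this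
  linarith

private lemma euclid {n : ℕ} (f : EuclideanSpace ℝ (Fin n) → ℝ)
    (V : Set (EuclideanSpace ℝ (Fin n))) (hV : IsOpen V) :
    (LocSemiconcaveOn f V ∧ LocSemiconvexOn f V) ↔ C11On f V := by
  constructor
  · rintro ⟨hcc, hcv⟩
    refine ⟨fderiv ℝ f, ?_, ?_⟩
    · -- differentiability
      intro x hx
      obtain ⟨ε, hε, K, hK, hsub, hest⟩ := key_estimate hcc hcv hx
      obtain ⟨p, hp⟩ := hest x (mem_ball_self hε)
      have hd : HasFDerivAt f p x := hasFDerivAt_of_quadratic_bound hK hε hp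
      rwa [hd.fderiv]
    · -- Lipschitz derivative
      intro x hx
      obtain ⟨ε, hε, K, hK, hsub, hest⟩ := key_estimate hcc hcv hx
      refine ⟨ε / 4, by positivity, (⟨6 * K, by positivity⟩ : NNReal), ?_⟩
      apply LipschitzOnWith.of_dist_le_mul
      intro y₁ hy₁ y₂ hy₂
      have hy₁b : y₁ ∈ ball x ε := ball_subset_ball (by linarith) hy₁.1
      have hy₂b : y₂ ∈ ball x ε := ball_subset_ball (by linarith) hy₂.1
      -- derivatives at y₁, y₂
      obtain ⟨p₁, hp₁⟩ := hest y₁ hy₁b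
      obtain ⟨p₂, hp₂⟩ := hest y₂ hy₂b
      have hr₁ : 0 < ε - dist y₁ x := by simpa [sub_pos] using mem_ball.1 hy₁b
      have hr₂ : 0 < ε - dist y₂ x := by simpa [sub_pos] using mem_ball.1 hy₂b
      have hd₁ : HasFDerivAt f p₁ y₁ :=
        hasFDerivAt_of_quadratic_bound hK hr₁ fun z hz =>
          hp₁ z (ball_subset_ball' (by linarith) hz)
      have hd₂ : HasFDerivAt f p₂ y₂ :=
        hasFDerivAt_of_quadratic_bound hK hr₂ fun z hz =>
          hp₂ z (ball_subset_ball' (by linarith) hz)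
      rw [hd₁.fderiv, hd₂.fderiv, dist_eq_norm, dist_eq_norm]
      show ‖p₁ - p₂‖ ≤ 6 * K * ‖y₁ - y₂‖
      rcases eq_or_ne y₁ y₂ with rfl | hne
      · rw [hd₁.unique hd₂]; simp
      set d := y₂ - y₁ with hd_def
      have hd0 : d ≠ 0 := sub_ne_zero.2 (Ne.symm hne)
      have hdn : 0 < ‖d‖ := norm_pos_iff.2 hd0
      have hdlt : ‖d‖ < ε / 2 := by
        have := dist_triangle y₂ x y₁
        have h1 := mem_ball.1 hy₁.1
        have h2 := mem_ball.1 hy₂.1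
        have : ‖d‖ = dist y₂ y₁ := by rw [dist_eq_norm]
        rw [this]
        calc dist y₂ y₁ ≤ dist y₂ x + dist x y₁ := dist_triangle _ _ _
          _ < ε / 4 + ε / 4 := by rw [dist_comm x y₁]; exact add_lt_add h2 h1
          _ = ε / 2 := by ring
      apply ContinuousLinearMap.opNorm_le_bound _ (by positivity)
      intro v
      rcases eq_or_ne v 0 with rfl | hv0
      · simp
      have hvn : 0 < ‖v‖ := norm_pos_iff.2 hv0
      set w := (‖d‖ / ‖v‖) • v with hw_def
      have hwn : ‖w‖ = ‖d‖ := by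
        rw [hw_def, norm_smul, Real.norm_eq_abs, abs_of_pos (by positivity)]
        field_simp
      have hz : y₂ + w ∈ ball x ε := by
        rw [mem_ball]
        calc dist (y₂ + w) x ≤ dist (y₂ + w) y₂ + dist y₂ x := dist_triangle _ _ _
          _ = ‖w‖ + dist y₂ x := by rw [dist_eq_norm]; simp
          _ < ε / 2 + ε / 4 := by
              rw [hwn]; exact add_lt_add hdlt (mem_ball.1 hy₂.1)
          _ < ε := by linarith
      have E2 := hp₂ (y₂ + w) hz
      have E1 := hp₁ (y₂ + w) hz
      have E0 := hp₁ y₂ hy₂b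
      have hs2 : y₂ + w - y₂ = w := by abel
      have hs1 : y₂ + w - y₁ = d + w := by rw [hd_def]; abel
      rw [hs2] at E2
      rw [hs1] at E1
      have hE0 : y₂ - y₁ = d := rfl
      rw [hE0] at E0
      have hlin : p₁ (d + w) = p₁ d + p₁ w := map_add _ _ _
      have hdw : ‖d + w‖ ≤ 2 * ‖d‖ := by
        calc ‖d + w‖ ≤ ‖d‖ + ‖w‖ := norm_add_le _ _
          _ = 2 * ‖d‖ := by rw [hwn]; ring
      -- |(p₁ - p₂) w| ≤ 6 K ‖d‖²
      have hkey : |(p₁ - p₂) w| ≤ 6 * K * ‖d‖ ^ 2 := by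
        have hval : (p₁ - p₂) w = (f (y₂ + w) - f y₂ - p₂ w)
            - (f (y₂ + w) - f y₁ - p₁ (d + w)) + (f y₂ - f y₁ - p₁ d) := by
          simp only [ContinuousLinearMap.sub_apply, hlin]; ring
        rw [hval]
        have hdw2 : ‖d + w‖ ^ 2 ≤ 4 * ‖d‖ ^ 2 := by nlinarith [norm_nonneg (d + w)]
        have b1 : |f (y₂ + w) - f y₁ - p₁ (d + w)| ≤ 4 * K * ‖d‖ ^ 2 := by
          refine le_trans E1 ?_
          nlinarith
        have b2 := E2
        rw [hwn] at b2
        have b0 := E0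
        have habs : |f (y₂ + w) - f y₂ - p₂ w - (f (y₂ + w) - f y₁ - p₁ (d + w))
              + (f y₂ - f y₁ - p₁ d)|
            ≤ |f (y₂ + w) - f y₂ - p₂ w - (f (y₂ + w) - f y₁ - p₁ (d + w))|
              + |f y₂ - f y₁ - p₁ d| := abs_add_le _ _
        have habs2 : |f (y₂ + w) - f y₂ - p₂ w - (f (y₂ + w) - f y₁ - p₁ (d + w))|
            ≤ |f (y₂ + w) - f y₂ - p₂ w| + |f (y₂ + w) - f y₁ - p₁ (d + w)| :=
          abs_sub _ _
        linarith
      -- transfer to v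
      have hvw : (p₁ - p₂) v = (‖v‖ / ‖d‖) * ((p₁ - p₂) w) := by
        rw [hw_def, map_smul]
        simp only [smul_eq_mul]
        rw [← mul_assoc]
        field_simp
      rw [Real.norm_eq_abs, hvw, abs_mul, abs_of_pos (by positivity : (0:ℝ) < ‖v‖ / ‖d‖)]
      have hnd : ‖y₁ - y₂‖ = ‖d‖ := by rw [hd_def, norm_sub_rev]
      rw [hnd]
      calc ‖v‖ / ‖d‖ * |(p₁ - p₂) w| ≤ ‖v‖ / ‖d‖ * (6 * K * ‖d‖ ^ 2) := by gcongr
        _ = 6 * K * ‖d‖ * ‖v‖ := by field_simp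
  · rintro ⟨f', hdiff, hlip⟩
    have key : ∀ x ∈ V, ∃ ε > (0:ℝ), ∃ K : ℝ, 0 ≤ K ∧ ball x ε ⊆ V ∧
        ∀ y ∈ ball x ε, ∀ z ∈ ball x ε,
          |f z - f y - f' y (z - y)| ≤ K * ‖z - y‖ ^ 2 := by
      intro x hx
      obtain ⟨ε₀, hε₀, K, hK⟩ := hlip x hx
      obtain ⟨ε₁, hε₁, hball⟩ := Metric.isOpen_iff.1 hV x hx
      refine ⟨min ε₀ ε₁, lt_min hε₀ hε₁, K, K.coe_nonneg, ?_, ?_⟩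
      · exact (ball_subset_ball (min_le_right _ _)).trans hball
      intro y hy z hz
      have hsubV : ball x (min ε₀ ε₁) ⊆ V :=
        (ball_subset_ball (min_le_right _ _)).trans hball
      have hsub0 : ball x (min ε₀ ε₁) ⊆ ball x ε₀ ∩ V := fun w hw =>
        ⟨ball_subset_ball (min_le_left _ _) hw, hsubV hw⟩
      have hseg : segment ℝ y z ⊆ ball x (min ε₀ ε₁) :=
        (convex_ball x _).segment_subset hy hz
      have bound : ∀ w ∈ segment ℝ y z, ‖f' w - f' y‖ ≤ (K : ℝ) * ‖z - y‖ := by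
        intro w hw
        have h1 : dist (f' w) (f' y) ≤ K * dist w y :=
          lipschitzOnWith_iff_dist_le_mul.1 (hK) w (hsub0 (hseg hw)) y (hsub0 hy)
        rw [dist_eq_norm] at h1
        refine h1.trans ?_
        have : dist w y ≤ dist z y := by
          obtain ⟨a, b, ha, hb, hab, rfl⟩ := hw
          have hb1 : b ≤ 1 := by linarith
          rw [dist_eq_norm, dist_eq_norm]
          have : a • y + b • z - y = b • (z - y) := by
            rw [smul_sub]
            have : a • y = (1 - b) • y := by rw [← hab]; congr 1; ring
            rw [this, sub_smul, one_smul]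
            abel
          rw [this, norm_smul, Real.norm_eq_abs, abs_of_nonneg hb]
          nlinarith [norm_nonneg (z - y)]
        rw [dist_eq_norm] at this
        exact mul_le_mul_of_nonneg_left this K.coe_nonneg
      have hfd : ∀ w ∈ segment ℝ y z, HasFDerivWithinAt f (f' w) (segment ℝ y z) w :=
        fun w hw => (hdiff w (hsubV (hseg hw))).hasFDerivWithinAt
      have := Convex.norm_image_sub_le_of_norm_hasFDerivWithin_le' hfd bound
        (convex_segment y z) (left_mem_segment ℝ y z) (right_mem_segment ℝ y z)
      rw [Real.norm_eq_abs] at this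
      calc |f z - f y - (f' y) (z - y)| ≤ (K : ℝ) * ‖z - y‖ * ‖z - y‖ := this
        _ = K * ‖z - y‖ ^ 2 := by ring
    constructor
    · intro x hx
      obtain ⟨ε, hε, K, hK0, hsub, hest⟩ := key x hx
      exact ⟨ε, hε, K, hsub, fun y hy => ⟨f' y, fun z hz => by
        have := abs_le.1 (hest y hy z hz); linarith [this.2]⟩⟩
    · intro x hx
      obtain ⟨ε, hε, K, hK0, hsub, hest⟩ := key x hx
      exact ⟨ε, hε, K, hsub, fun y hy => ⟨f' y, fun z hz => by
        have := abs_le.1 (hest y hy z hz); linarith [this.1]⟩⟩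


/-- Let `M` be a smooth manifold, `U ⊆ M` open and `f : U → ℝ`. Then `f`
is both locally semiconcave and locally semiconvex on `U` if and only if `f` is
`C^{1,1}_loc` on `U` (i.e. `C¹` with locally Lipschitz differential, in every chart). -/
theorem c11_iff_semiconcave_and_semiconvex {n : ℕ} {M : Type*} [TopologicalSpace M]
    [ChartedSpace (EuclideanSpace ℝ (Fin n)) M]
    [IsManifold (𝓡 n) (⊤ : ℕ∞) M]
    (U : Set M) (hU : IsOpen U) (f : M → ℝ) :
    (MLocSemiconcaveOn (n := n) f U ∧ MLocSemiconvexOn (n := n) f U) ↔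
      MC11On (n := n) f U := by
  have hopen : ∀ e : OpenPartialHomeomorph M (EuclideanSpace ℝ (Fin n)),
      IsOpen (e '' (U ∩ e.source)) := fun e =>
    e.isOpen_image_of_subset_source (hU.inter e.open_source) Set.inter_subset_right
  constructor
  · rintro ⟨h1, h2⟩ e he
    exact (euclid _ _ (hopen e)).1 ⟨h1 e he, h2 e he⟩
  · intro h
    exact ⟨fun e he => ((euclid _ _ (hopen e)).2 (h e he)).1,
           fun e he => ((euclid _ _ (hopen e)).2 (h e he)).2⟩
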